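/- Let α, β, γ, c be real numbers with α > 0, γ ≠ 0, β + c > 0, and take A = 0 in the system (★). If (φ, ψ) : ℝ → ℝ² is a nonconstant solution of (★) with lim_{y→±∞} φ(y) = 0 and lim_{y→±∞} ψ(y) = 0, then ψ(y)² = ((β+c)/α) φ(y)² + (γ/(3α)) φ(y)³ for all y ∈ ℝ. -/

import Mathlib

/-- For the system (★) with `A = 0` (`φ' = ψ`,
`ψ' = ((β+c)φ + (γ/2)φ²)/α`), any nonconstant solution with `φ, ψ → 0` at `±∞`
satisfies `ψ² = ((β+c)/α) φ² + (γ/(3α)) φ³` everywhere. -/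
theorem stmt_7 (α β γ c : ℝ) (hα : 0 < α) (hγ : γ ≠ 0) (hβc : 0 < β + c)
    (φ ψ : ℝ → ℝ)
    (hφ : ∀ y : ℝ, HasDerivAt φ (ψ y) y)
    (hψ : ∀ y : ℝ, HasDerivAt ψ (((β + c) * φ y + γ / 2 * (φ y) ^ 2) / α) y)
    (hnc : ¬ ∀ y z : ℝ, (φ y, ψ y) = (φ z, ψ z))
    (hφtop : Filter.Tendsto φ Filter.atTop (nhds 0))
    (hφbot : Filter.Tendsto φ Filter.atBot (nhds 0))
    (hψtop : Filter.Tendsto ψ Filter.atTop (nhds 0))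
    (hψbot : Filter.Tendsto ψ Filter.atBot (nhds 0)) :
    ∀ y : ℝ, (ψ y) ^ 2 = (β + c) / α * (φ y) ^ 2 + γ / (3 * α) * (φ y) ^ 3 := by
  set E : ℝ → ℝ := fun y =>
    (ψ y) ^ 2 - ((β + c) / α * (φ y) ^ 2 + γ / (3 * α) * (φ y) ^ 3) with hE
  have hαne : α ≠ 0 := ne_of_gt hα
  have hder : ∀ y : ℝ, HasDerivAt E 0 y := by
    intro y
    have h1 := ((hψ y).pow 2).sub
      ((((hφ y).pow 2).const_mul ((β + c) / α)).add
        (((hφ y).pow 3).const_mul (γ / (3 * α))))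
    convert h1 using 1
    · rfl
    · rfl
    · ext x; simp only [hE, Pi.sub_apply, Pi.add_apply, Pi.pow_apply]
    field_simp
    ring
  have hconst : ∀ y : ℝ, E y = E 0 := by
    intro y
    have : ∀ x : ℝ, deriv E x = 0 := fun x => (hder x).deriv
    exact is_const_of_deriv_eq_zero (fun x => (hder x).differentiableAt) this y 0
  have hlim : Filter.Tendsto E Filter.atTop (nhds 0) := by
    have : Filter.Tendsto E Filter.atTop
        (nhds ((0:ℝ) ^ 2 - ((β + c) / α * (0:ℝ) ^ 2 + γ / (3 * α) * (0:ℝ) ^ 3))) :=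
      (hψtop.pow 2).sub
        (((hφtop.pow 2).const_mul ((β + c) / α)).add
          ((hφtop.pow 3).const_mul (γ / (3 * α))))
    simpa using this
  have hlim0 : E 0 = 0 := by
    have hc : Filter.Tendsto E Filter.atTop (nhds (E 0)) := by
      have : E = fun _ => E 0 := funext hconst
      rw [this]; exact tendsto_const_nhds
    exact tendsto_nhds_unique hc hlim
  intro y
  have := (hconst y).trans hlim0
  simp only [hE] at this
  linarith
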